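/- Let L₁ and L₂ be finite-dimensional real Lie algebras and let B be a symmetric, invariant, non-degenerate bilinear form on the product Lie algebra L = L₁ × L₂. Assume that the restriction of B to the centre Z(L) of L is degenerate, i.e. there exists a nonzero z ∈ Z(L) with B(z,w) = 0 for all w ∈ Z(L). Then both L₁ and L₂ are quasi-classical, i.e. each admits a symmetric, invariant, non-degenerate bilinear form. -/

import Mathlib

section ProdLie

variable (L M : Type*) [LieRing L] [LieRing M]

/-- The product of two Lie rings, with componentwise bracket. -/
instance Prod.instLieRing : LieRing (L × M) where
  bracket p q := (⁅p.1, q.1⁆, ⁅p.2, q.2⁆)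
  add_lie x y z := by
    show (⁅(x+y).1, z.1⁆, ⁅(x+y).2, z.2⁆) = (⁅x.1,z.1⁆, ⁅x.2,z.2⁆) + (⁅y.1,z.1⁆, ⁅y.2,z.2⁆)
    simp only [Prod.fst_add, Prod.snd_add, Prod.mk_add_mk, Prod.mk.injEq]
    exact ⟨add_lie .., add_lie ..⟩
  lie_add x y z := by
    show (⁅x.1, (y+z).1⁆, ⁅x.2, (y+z).2⁆) = (⁅x.1,y.1⁆, ⁅x.2,y.2⁆) + (⁅x.1,z.1⁆, ⁅x.2,z.2⁆)
    simp only [Prod.fst_add, Prod.snd_add, Prod.mk_add_mk, Prod.mk.injEq]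
    exact ⟨lie_add .., lie_add ..⟩
  lie_self x := by
    show (⁅x.1, x.1⁆, ⁅x.2, x.2⁆) = (0 : L × M)
    simp
  leibniz_lie x y z := by
    show (⁅x.1, ⁅y.1,z.1⁆⁆, ⁅x.2, ⁅y.2,z.2⁆⁆)
      = (⁅⁅x.1,y.1⁆, z.1⁆, ⁅⁅x.2,y.2⁆, z.2⁆) + (⁅y.1, ⁅x.1,z.1⁆⁆, ⁅y.2, ⁅x.2,z.2⁆⁆)
    simp only [Prod.mk_add_mk, Prod.mk.injEq]
    exact ⟨leibniz_lie .., leibniz_lie ..⟩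

variable (R : Type*) [CommRing R] [LieAlgebra R L] [LieAlgebra R M]

/-- The product of two Lie algebras, with componentwise bracket. -/
instance Prod.instLieAlgebra : LieAlgebra R (L × M) where
  lie_smul t x y := by
    show (⁅x.1, (t • y).1⁆, ⁅x.2, (t • y).2⁆) = t • (⁅x.1,y.1⁆, ⁅x.2,y.2⁆)
    simp

@[simp] theorem Prod.bracket_def (p q : L × M) : ⁅p, q⁆ = (⁅p.1, q.1⁆, ⁅p.2, q.2⁆) := rfl

end ProdLie

open Submodule LinearMap in

open Submodule LinearMap

/-- A complement of `R` containing `D`, given `Disjoint R D`. -/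
theorem exists_isCompl_of_disjoint {K V : Type*} [Field K] [AddCommGroup V] [Module K V]
    (R D : Submodule K V) (h : Disjoint R D) : ∃ S, D ≤ S ∧ IsCompl R S := by
  obtain ⟨q, hq⟩ := Submodule.exists_isCompl (R ⊔ D)
  refine ⟨D ⊔ q, le_sup_left, ?_, ?_⟩
  · -- disjoint
    rw [Submodule.disjoint_def]
    intro x hxR hxS
    obtain ⟨d, hd, e, he, rfl⟩ := Submodule.mem_sup.mp hxS
    have he0 : e ∈ (R ⊔ D) ⊓ q := ⟨by
      have : e = (d + e) - d := by abel
      rw [this]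
      exact Submodule.sub_mem _ (Submodule.mem_sup_left hxR) (Submodule.mem_sup_right hd), he⟩
    have : e = 0 := by
      have := hq.disjoint.le_bot he0
      simpa using this
    subst this
    have : d + 0 ∈ R ⊓ D := ⟨hxR, by simpa using hd⟩
    simpa using h.le_bot this
  · -- codisjoint
    rw [codisjoint_iff]
    rw [← sup_assoc]
    exact codisjoint_iff.mp hq.codisjoint

/-- A positive definite symmetric bilinear form on a finite-dimensional real space. -/
theorem exists_posdef (V : Type*) [AddCommGroup V] [Module ℝ V] [FiniteDimensional ℝ V] :
    ∃ g : V →ₗ[ℝ] V →ₗ[ℝ] ℝ, (∀ x y, g x y = g y x) ∧ (∀ x, g x x = 0 → x = 0) := by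
  classical
  let b := Module.finBasis ℝ V
  refine ⟨∑ i, (LinearMap.mul ℝ ℝ).compl₁₂ (b.coord i) (b.coord i), ?_, ?_⟩
  · intro x y
    simp only [LinearMap.sum_apply, LinearMap.compl₁₂_apply, LinearMap.mul_apply']
    exact Finset.sum_congr rfl fun i _ => mul_comm _ _
  · intro x h
    simp only [LinearMap.sum_apply, LinearMap.compl₁₂_apply, LinearMap.mul_apply'] at h
    have hz : ∀ i, b.coord i x = 0 := by
      intro i
      have := Finset.sum_eq_zero_iff_of_nonneg (fun j _ => mul_self_nonneg (b.coord j x)) |>.mp h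
      have := this i (Finset.mem_univ i)
      nlinarith [this]
    exact b.forall_coord_eq_zero_iff.mp hz

/-- Repair lemma: a symmetric invariant form whose radical meets the derived span trivially
yields quasi-classicality. -/
theorem quasi_of_radical_disjoint_derived (V : Type*) [LieRing V] [LieAlgebra ℝ V]
    [FiniteDimensional ℝ V] (B₀ : V →ₗ[ℝ] V →ₗ[ℝ] ℝ)
    (hs : ∀ x y, B₀ x y = B₀ y x)
    (hi : ∀ x y z, B₀ ⁅x, y⁆ z = B₀ x ⁅y, z⁆)
    (hd : ∀ x, B₀ x = 0 → x ∈ Submodule.span ℝ {z : V | ∃ a b : V, ⁅a, b⁆ = z} → x = 0) :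
    ∃ B₁ : V →ₗ[ℝ] V →ₗ[ℝ] ℝ,
      (∀ x y, B₁ x y = B₁ y x) ∧
      (∀ x y z, B₁ ⁅x, y⁆ z = B₁ x ⁅y, z⁆) ∧
      (∀ x, (∀ y, B₁ x y = 0) → x = 0) := by
  classical
  set R : Submodule ℝ V := LinearMap.ker B₀ with hR
  set D : Submodule ℝ V := Submodule.span ℝ {z : V | ∃ a b : V, ⁅a, b⁆ = z} with hD
  have hdisj : Disjoint R D := by
    rw [Submodule.disjoint_def]
    intro x hxR hxD
    exact hd x (LinearMap.mem_ker.mp hxR) hxD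
  obtain ⟨S, hDS, hcompl⟩ := exists_isCompl_of_disjoint R D hdisj
  obtain ⟨g, hgsymm, hgpos⟩ := exists_posdef V
  set π := Submodule.projectionOnto R S hcompl with hπ
  set ρ : V →ₗ[ℝ] V := R.subtype ∘ₗ π with hρ
  have hρR : ∀ x, ρ x ∈ R := fun x => (π x).2
  have hρS : ∀ x ∈ S, ρ x = 0 := by
    intro x hx
    simp [hρ, hπ, Submodule.projectionOnto_apply_of_mem_right hcompl hx]
  have hρid : ∀ x ∈ R, ρ x = x := by
    intro x hx
    simp [hρ, hπ, Submodule.projectionOnto_apply_left hcompl ⟨x, hx⟩]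
  have hρbr : ∀ a b : V, ρ ⁅a, b⁆ = 0 := by
    intro a b
    exact hρS _ (hDS (Submodule.subset_span ⟨a, b, rfl⟩))
  refine ⟨B₀ + g.compl₁₂ ρ ρ, ?_, ?_, ?_⟩
  · intro x y
    simp only [LinearMap.add_apply, LinearMap.compl₁₂_apply]
    rw [hs, hgsymm]
  · intro x y z
    simp only [LinearMap.add_apply, LinearMap.compl₁₂_apply, hρbr, map_zero,
      LinearMap.zero_apply, hi]
  · intro x hx
    simp only [LinearMap.add_apply, LinearMap.compl₁₂_apply] at hx
    -- s := x - ρ x lies in S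
    have hsS : x - ρ x ∈ S := by
      rw [← Submodule.ker_projectionOnto hcompl, LinearMap.mem_ker]
      ext
      simp [hρ, hπ, Submodule.projectionOnto_apply_left hcompl (π x),
        Submodule.projection_apply_of_mem_left hcompl (Submodule.projection_apply_mem hcompl x)]
    -- B₀ x vanishes on S
    have hBS : ∀ y ∈ S, B₀ x y = 0 := by
      intro y hy
      have := hx y
      rwa [hρS y hy, map_zero, add_zero] at this
    -- in fact B₀ x = 0 entirely
    have hker : ∀ r ∈ R, B₀ r = 0 := fun r hr => LinearMap.mem_ker.mp hr
    have hB0 : B₀ x = 0 := by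
      ext y
      have hyS : y - ρ y ∈ S := by
        rw [← Submodule.ker_projectionOnto hcompl, LinearMap.mem_ker]
        ext
        simp [hρ, hπ, Submodule.projectionOnto_apply_left hcompl (π y),
        Submodule.projection_apply_of_mem_left hcompl (Submodule.projection_apply_mem hcompl y)]
      have h1 : B₀ x (ρ y) = 0 := by
        rw [hs, hker (ρ y) (hρR y)]
        simp
      have h2 : B₀ x (y - ρ y) = 0 := hBS _ hyS
      have : B₀ x y = B₀ x (ρ y) + B₀ x (y - ρ y) := by rw [← map_add]; congr 1; abel
      simp [this, h1, h2]
    have hxR : x ∈ R := LinearMap.mem_ker.mpr hB0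
    have hxx := hx x
    rw [hρid x hxR, hB0] at hxx
    simp only [LinearMap.zero_apply, zero_add] at hxx
    exact hgpos x hxx

/-- Auxiliary: apply the repair lemma to one factor of the product. -/
theorem factor_quasi {L₁ L₂ : Type*} [LieRing L₁] [LieAlgebra ℝ L₁] [FiniteDimensional ℝ L₁]
    [LieRing L₂] [LieAlgebra ℝ L₂]
    (B : (L₁ × L₂) →ₗ[ℝ] (L₁ × L₂) →ₗ[ℝ] ℝ)
    (hsymm : ∀ x y, B x y = B y x)
    (hinv : ∀ x y z, B ⁅x, y⁆ z = B x ⁅y, z⁆)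
    (hnondeg : ∀ x, (∀ y, B x y = 0) → x = 0) :
    ∃ B₁ : L₁ →ₗ[ℝ] L₁ →ₗ[ℝ] ℝ,
      (∀ x y, B₁ x y = B₁ y x) ∧
      (∀ x y z, B₁ ⁅x, y⁆ z = B₁ x ⁅y, z⁆) ∧
      (∀ x, (∀ y, B₁ x y = 0) → x = 0) := by
  set inl : L₁ →ₗ[ℝ] L₁ × L₂ := LinearMap.inl ℝ L₁ L₂ with hinl
  set B₀ : L₁ →ₗ[ℝ] L₁ →ₗ[ℝ] ℝ := B.compl₁₂ inl inl with hB₀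
  have hbr : ∀ a b : L₁, ((⁅a, b⁆ : L₁), (0 : L₂)) = ⁅((a, 0) : L₁ × L₂), (b, 0)⁆ := by
    intro a b
    simp [Prod.bracket_def]
  apply quasi_of_radical_disjoint_derived L₁ B₀
  · intro x y
    simp only [hB₀, LinearMap.compl₁₂_apply, hinl, LinearMap.inl_apply]
    exact hsymm _ _
  · intro x y z
    simp only [hB₀, LinearMap.compl₁₂_apply, hinl, LinearMap.inl_apply]
    rw [hbr, hinv]
    congr 1
    simp [Prod.bracket_def]
  · intro x h0 hxD
    have hcross : ∀ w₂ : L₂, B (x, 0) (0, w₂) = 0 := by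
      intro w₂
      set f : L₁ →ₗ[ℝ] ℝ := (B.flip ((0 : L₁), w₂)).comp inl with hf
      have hDf : Submodule.span ℝ {z : L₁ | ∃ a b : L₁, ⁅a, b⁆ = z} ≤ LinearMap.ker f := by
        rw [Submodule.span_le]
        rintro _ ⟨a, b, rfl⟩
        simp only [SetLike.mem_coe, LinearMap.mem_ker, hf, LinearMap.comp_apply,
          LinearMap.flip_apply, hinl, LinearMap.inl_apply]
        rw [hbr, hinv]
        have : (⁅((b, 0) : L₁ × L₂), ((0 : L₁), w₂)⁆ : L₁ × L₂) = 0 := by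
          simp [Prod.bracket_def]
        rw [this, map_zero]
      have := hDf hxD
      simpa [hf, hinl] using this
    have hx0 : ((x, 0) : L₁ × L₂) = 0 := by
      apply hnondeg
      intro w
      have hw : w = (w.1, (0 : L₂)) + ((0 : L₁), w.2) := by simp
      rw [hw, map_add]
      have h1 : B (x, 0) (w.1, 0) = 0 := by
        have := congrArg (fun φ => φ w.1) h0
        simpa [hB₀, hinl] using this
      rw [h1, hcross, add_zero]
    simpa using congrArg Prod.fst hx0


/-- If the product Lie algebra `L = L₁ × L₂` carries a symmetric, invariant,
non-degenerate bilinear form `B` whose restriction to the centre `Z(L)` is degenerate, then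
both `L₁` and `L₂` are quasi-classical. -/
theorem factors_quasiClassical_of_degenerate_on_centre
    (L₁ L₂ : Type*) [LieRing L₁] [LieAlgebra ℝ L₁] [FiniteDimensional ℝ L₁]
    [LieRing L₂] [LieAlgebra ℝ L₂] [FiniteDimensional ℝ L₂]
    (B : (L₁ × L₂) →ₗ[ℝ] (L₁ × L₂) →ₗ[ℝ] ℝ)
    (hsymm : ∀ x y, B x y = B y x)
    (hinv : ∀ x y z, B ⁅x, y⁆ z = B x ⁅y, z⁆)
    (hnondeg : ∀ x, (∀ y, B x y = 0) → x = 0)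
    (hdeg : ∃ z ∈ LieAlgebra.center ℝ (L₁ × L₂), z ≠ 0 ∧
      ∀ w ∈ LieAlgebra.center ℝ (L₁ × L₂), B z w = 0) :
    (∃ B₁ : L₁ →ₗ[ℝ] L₁ →ₗ[ℝ] ℝ,
      (∀ x y, B₁ x y = B₁ y x) ∧
      (∀ x y z, B₁ ⁅x, y⁆ z = B₁ x ⁅y, z⁆) ∧
      (∀ x, (∀ y, B₁ x y = 0) → x = 0)) ∧
    (∃ B₂ : L₂ →ₗ[ℝ] L₂ →ₗ[ℝ] ℝ,
      (∀ x y, B₂ x y = B₂ y x) ∧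
      (∀ x y z, B₂ ⁅x, y⁆ z = B₂ x ⁅y, z⁆) ∧
      (∀ x, (∀ y, B₂ x y = 0) → x = 0)) := by
  constructor
  · exact factor_quasi B hsymm hinv hnondeg
  · set σ : (L₂ × L₁) →ₗ[ℝ] (L₁ × L₂) :=
      (LinearMap.snd ℝ L₂ L₁).prod (LinearMap.fst ℝ L₂ L₁) with hσ
    have hσbr : ∀ p q : L₂ × L₁, σ ⁅p, q⁆ = ⁅σ p, σ q⁆ := by
      intro p q
      simp [hσ, Prod.bracket_def]
    set B' : (L₂ × L₁) →ₗ[ℝ] (L₂ × L₁) →ₗ[ℝ] ℝ := B.compl₁₂ σ σ with hB'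
    refine factor_quasi B' ?_ ?_ ?_
    · intro x y; simp only [hB', LinearMap.compl₁₂_apply]; exact hsymm _ _
    · intro x y z
      simp only [hB', LinearMap.compl₁₂_apply, hσbr]
      exact hinv _ _ _
    · intro x hx
      have : σ x = 0 := by
        apply hnondeg
        intro y
        have := hx (y.2, y.1)
        simpa [hB', hσ] using this
      have h1 := congrArg Prod.fst this
      have h2 := congrArg Prod.snd this
      simp only [hσ, LinearMap.prod_apply, Pi.prod, LinearMap.snd_apply,
        LinearMap.fst_apply, Prod.fst_zero, Prod.snd_zero] at h1 h2
      exact Prod.ext h2 h1
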